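/- arXiv:1903.09875 — 3 statements merged into one kernel-verified Lean document; each statement's English description precedes it below -/
import Mathlib

section
/- Let A be a Banach algebra, φ a character on A with I_φ = ker φ satisfying that the closed linear span of A·I_φ equals I_φ. Let m ∈ A** satisfy ⟨m, f·(ab)⟩ = φ(b)⟨m, f·a⟩ for all f ∈ A*, a, b ∈ A (e.g., if m is a topologically left invariant φ-mean restricted appropriately). Then for every f ∈ A*, the functional m·f defined by ⟨m·f, a⟩ = ⟨m, f·a⟩ vanishes on I_φ, and hence ⟨m, f·(ab)⟩ = ⟨m, f·(ba)⟩ for all a, b ∈ A. -/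
open scoped Topology
open Filter

noncomputable def fdot {A : Type*} [NonUnitalNormedRing A] [NormedSpace ℂ A]
    [IsScalarTower ℂ A A] [SMulCommClass ℂ A A] (f : A →L[ℂ] ℂ) (a : A) : A →L[ℂ] ℂ :=
  f.comp (ContinuousLinearMap.mul ℂ A a)

/-- If span A·I_φ is dense in I_φ and m ∈ A** satisfies
⟨m, f·(ab)⟩ = φ(b)⟨m, f·a⟩, then m·f vanishes on I_φ and
⟨m, f·(ab)⟩ = ⟨m, f·(ba)⟩. -/
theorem stmt5 {A : Type*} [NonUnitalNormedRing A] [NormedSpace ℂ A]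
    [IsScalarTower ℂ A A] [SMulCommClass ℂ A A] [CompleteSpace A]
    (φ : A →L[ℂ] ℂ) (hφmul : ∀ a b : A, φ (a * b) = φ a * φ b) (hφ0 : φ ≠ 0)
    (hI : (Submodule.span ℂ {x : A | ∃ a b : A, φ b = 0 ∧ x = a * b}).topologicalClosure
        = LinearMap.ker (φ : A →ₗ[ℂ] ℂ))
    (m : (A →L[ℂ] ℂ) →L[ℂ] ℂ)
    (hm : ∀ (f : A →L[ℂ] ℂ) (a b : A), m (fdot f (a * b)) = φ b * m (fdot f a)) :
    (∀ (f : A →L[ℂ] ℂ) (a : A), φ a = 0 → m (fdot f a) = 0) ∧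
    (∀ (f : A →L[ℂ] ℂ) (a b : A), m (fdot f (a * b)) = m (fdot f (b * a))) := by
  have key : ∀ (f : A →L[ℂ] ℂ) (a : A), φ a = 0 → m (fdot f a) = 0 := by
    intro f a ha
    let T : A →L[ℂ] ℂ :=
      m.comp ((ContinuousLinearMap.compL ℂ A A ℂ f).comp (ContinuousLinearMap.mul ℂ A))
    have hTeq : ∀ x : A, T x = m (fdot f x) := fun x => rfl
    have hsub : Submodule.span ℂ {x : A | ∃ a b : A, φ b = 0 ∧ x = a * b}
        ≤ LinearMap.ker (T : A →ₗ[ℂ] ℂ) := by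
      rw [Submodule.span_le]
      rintro x ⟨a, b, hb, rfl⟩
      have : T (a * b) = 0 := by rw [hTeq, hm, hb, zero_mul]
      simpa [LinearMap.mem_ker] using this
    have hcl : (Submodule.span ℂ {x : A | ∃ a b : A, φ b = 0 ∧ x = a * b}).topologicalClosure
        ≤ LinearMap.ker (T : A →ₗ[ℂ] ℂ) :=
      Submodule.topologicalClosure_minimal _ hsub (ContinuousLinearMap.isClosed_ker T)
    have hmem : a ∈ LinearMap.ker (T : A →ₗ[ℂ] ℂ) := by
      apply hcl
      rw [hI]
      simpa [LinearMap.mem_ker] using ha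
    have : T a = 0 := hmem
    rwa [hTeq] at this
  refine ⟨key, fun f a b => ?_⟩
  have h0 : φ (a * b - b * a) = 0 := by
    rw [map_sub, hφmul, hφmul]; ring
  have hsubf : fdot f (a * b - b * a) = fdot f (a * b) - fdot f (b * a) := by
    ext x
    simp [fdot, sub_mul]
  have := key f (a * b - b * a) h0
  rw [hsubf, map_sub, sub_eq_zero] at this
  exact this
end

section
/- Let A be a faithful Banach algebra such that the closed linear span of A·A is A. Then A_M is an ideal in its second dual (with the first Arens product) if and only if A is an ideal in its second dual. Equivalently, left and right multiplication operators by elements of A_M are weakly compact on A_M if and only if left and right multiplication operators by elements of A are weakly compact on A. -/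
open scoped Topology
open Filter
open scoped Pointwise

noncomputable def mnorm {A : Type*} [NonUnitalNormedRing A] (a : A) : ℝ :=
  ⨆ b : {b : A // ‖b‖ ≤ 1}, max ‖a * b.1‖ ‖b.1 * a‖

/-- A bounded operator is weakly compact: it maps bounded sets to relatively
weakly compact sets. -/
def WkCompact {X : Type*} [NormedAddCommGroup X] [NormedSpace ℂ X]
    (T : X →L[ℂ] X) : Prop :=
  ∀ s : Set X, Bornology.IsBounded s →
    IsCompact (closure (T '' s : Set (WeakSpace ℂ X)))

set_option linter.unusedSectionVars false
set_option maxHeartbeats 1000000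


section Weak
variable {X Y : Type*} [NormedAddCommGroup X] [NormedSpace ℂ X]
  [NormedAddCommGroup Y] [NormedSpace ℂ Y]

noncomputable def unW {X : Type*} [SeminormedAddCommGroup X] [Module ℂ X] :
    WeakSpace ℂ X → X := (toWeakSpace ℂ X).symm

lemma unW_sub (a b : WeakSpace ℂ X) : unW (a - b) = unW a - unW b :=
  map_sub (toWeakSpace ℂ X).symm a b

lemma unW_toW (a : X) : unW (toWeakSpace ℂ X a) = a := rfl

lemma eval_cont (g : X →L[ℂ] ℂ) : Continuous fun c : WeakSpace ℂ X => g (unW c) :=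
  WeakBilin.eval_continuous _ g

lemma wk_mono {s t : Set (WeakSpace ℂ X)} (h : s ⊆ t)
    (ht : IsCompact (closure t)) : IsCompact (closure s) :=
  ht.closure_of_subset (Set.Subset.trans h subset_closure)

lemma wk_image (V : X →L[ℂ] Y) {s : Set (WeakSpace ℂ X)}
    (hs : IsCompact (closure s)) :
    IsCompact (closure (WeakSpace.map V '' s)) := by
  have h1 : IsCompact (WeakSpace.map V '' closure s) :=
    hs.image (WeakSpace.map V).continuous
  refine h1.closure_of_subset ?_
  rintro - ⟨x, hx, rfl⟩
  exact ⟨x, subset_closure hx, rfl⟩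

lemma wk_add {s t : Set (WeakSpace ℂ X)} (hs : IsCompact (closure s))
    (ht : IsCompact (closure t)) : IsCompact (closure (s + t)) := by
  refine (hs.add ht).closure_of_subset ?_
  rintro - ⟨x, hx, y, hy, rfl⟩
  exact ⟨x, subset_closure hx, y, subset_closure hy, rfl⟩

noncomputable instance wkCSMul : ContinuousSMul ℂ (WeakSpace ℂ X) :=
  WeakBilin.instContinuousSMul ((topDualPairing ℂ X).flip)

lemma wk_smul (c : ℂ) {s : Set (WeakSpace ℂ X)} (hs : IsCompact (closure s)) :
    IsCompact (closure (c • s)) := by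
  have h1 : IsCompact ((fun z : WeakSpace ℂ X => c • z) '' closure s) :=
    hs.image (continuous_const_smul c)
  refine h1.closure_of_subset ?_
  rintro - ⟨x, hx, rfl⟩
  exact ⟨x, subset_closure hx, rfl⟩

lemma isClosed_wball (r : ℝ) :
    IsClosed {c : WeakSpace ℂ X | ‖unW c‖ ≤ r} := by
  rcases lt_or_ge r 0 with hr | hr
  · convert isClosed_empty (X := WeakSpace ℂ X)
    rw [Set.eq_empty_iff_forall_notMem]
    intro c hc
    exact absurd (le_trans (norm_nonneg _) hc) (not_le.mpr hr)
  rw [← isOpen_compl_iff, isOpen_iff_forall_mem_open]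
  intro c hc
  have hc' : r < ‖unW c‖ := not_le.mp hc
  have hne : unW c ≠ 0 := by
    intro h
    rw [h, norm_zero] at hc'
    linarith
  obtain ⟨g, hg1, hgc⟩ := exists_dual_vector ℂ (unW c) (norm_ne_zero_iff.mpr hne)
  refine ⟨{z : WeakSpace ℂ X | r < (g (unW z)).re}, ?_, ?_, ?_⟩
  · intro z hz
    simp only [Set.mem_setOf_eq] at hz
    intro hmem
    have h1 : (g (unW z)).re ≤ ‖unW z‖ := by
      calc (g (unW z)).re ≤ ‖g (unW z)‖ := Complex.re_le_norm _
        _ ≤ ‖g‖ * ‖unW z‖ := g.le_opNorm _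
        _ = ‖unW z‖ := by rw [hg1, one_mul]
    have h2 : ‖unW z‖ ≤ r := hmem
    linarith
  · exact (isOpen_Ioi (a := r)).preimage
      (Complex.continuous_re.comp (eval_cont g))
  · show r < (g (unW c)).re
    rw [hgc]
    simpa using hc'
end Weak

section Approx
variable {X : Type*} [NormedAddCommGroup X] [NormedSpace ℂ X] [CompleteSpace X]

lemma pairing_inj : Function.Injective ⇑((topDualPairing ℂ X).flip) := by
  intro a b hab
  by_contra hne
  obtain ⟨g, hg1, hgv⟩ := exists_dual_vector ℂ (a - b) (norm_ne_zero_iff.mpr (sub_ne_zero.mpr hne))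
  have h1 : (topDualPairing ℂ X).flip a g = (topDualPairing ℂ X).flip b g := by rw [hab]
  have h2 : g a = g b := h1
  have h3 : g (a - b) = 0 := by rw [map_sub, h2, sub_self]
  rw [hgv] at h3
  have : ‖a - b‖ = 0 := by
    have := congrArg Complex.re h3
    simpa using this
  exact (sub_ne_zero.mpr hne) (norm_eq_zero.mp this)

lemma wk_approx {D : Set (WeakSpace ℂ X)}
    (h : ∀ ε : ℝ, 0 < ε → ∃ K : Set (WeakSpace ℂ X), IsCompact (closure K) ∧
      ∀ d ∈ D, ∃ k ∈ K, ‖unW d - unW k‖ ≤ ε) :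
    IsCompact (closure D) := by
  classical
  set ε : ℕ → ℝ := fun n => 1 / ((n : ℝ) + 1) with hεdef
  have hεpos : ∀ n, 0 < ε n := fun n => by positivity
  have hεanti : ∀ N n, N ≤ n → ε n ≤ ε N := by
    intro N n hNn
    apply one_div_le_one_div_of_le (by positivity)
    have : (N : ℝ) ≤ n := by exact_mod_cast hNn
    linarith
  have hεlim : Filter.Tendsto ε atTop (𝓝 0) :=
    tendsto_one_div_add_atTop_nhds_zero_nat
  choose K hKc hKap using fun n => h (ε n) (hεpos n)
  set Kc : ℕ → Set (WeakSpace ℂ X) := fun n => closure (K n) with hKcdef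
  set C : ℕ → Set (WeakSpace ℂ X) :=
    fun n => Kc n + {c : WeakSpace ℂ X | ‖unW c‖ ≤ ε n} with hCdef
  have hCclosed : ∀ n, IsClosed (C n) :=
    fun n => (isClosed_wball (ε n)).add_left_of_isCompact (hKc n)
  have hDC : ∀ n, closure D ⊆ C n := by
    intro n
    apply closure_minimal _ (hCclosed n)
    intro d hd
    obtain ⟨k, hk, hnk⟩ := hKap n d hd
    refine ⟨k, subset_closure hk, d - k, ?_, show k + (d - k) = d by abel⟩
    rw [Set.mem_setOf_eq, unW_sub]
    exact hnk
  rw [isCompact_iff_ultrafilter_le_nhds']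
  intro V hV
  have hCV : ∀ n, C n ∈ V := fun n => Filter.mem_of_superset hV (hDC n)
  let κ : ℕ → WeakSpace ℂ X → WeakSpace ℂ X := fun n c =>
    if h : ∃ k, k ∈ Kc n ∧ ‖unW c - unW k‖ ≤ ε n then h.choose else c
  have hκmem : ∀ n c, c ∈ C n → κ n c ∈ Kc n ∧ ‖unW c - unW (κ n c)‖ ≤ ε n := by
    intro n c hc
    obtain ⟨k, hk, b, hb, rfl⟩ := hc
    have hex : ∃ k', k' ∈ Kc n ∧ ‖unW (k + b) - unW k'‖ ≤ ε n := by
      refine ⟨k, hk, ?_⟩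
      have : unW (k + b) - unW k = unW b := by
        rw [show unW (k + b) = unW k + unW b from map_add (toWeakSpace ℂ X).symm k b]
        abel
      rw [this]
      exact hb
    have hval : κ n (k + b) = hex.choose := dif_pos hex
    rw [hval]
    exact ⟨hex.choose_spec.1, hex.choose_spec.2⟩
  have hx : ∀ n, ∃ x ∈ Kc n, ↑(V.map (κ n)) ≤ 𝓝 x := by
    intro n
    refine (hKc n).ultrafilter_le_nhds' _ ?_
    rw [Ultrafilter.mem_map]
    exact Filter.mem_of_superset (hCV n) (fun c hc => (hκmem n c hc).1)
  choose x hxK hxle using hx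
  have hκtend : ∀ n, Filter.Tendsto (κ n) ↑V (𝓝 (x n)) := by
    intro n
    have := hxle n
    rwa [Ultrafilter.coe_map] at this
  have hFtend : ∀ (f : X →L[ℂ] ℂ) n,
      Filter.Tendsto (fun c => f (unW (κ n c))) ↑V (𝓝 (f (unW (x n)))) :=
    fun f n => ((eval_cont f).tendsto (x n)).comp (hκtend n)
  have key : ∀ (f : X →L[ℂ] ℂ) n m,
      ‖f (unW (x n)) - f (unW (x m))‖ ≤ ‖f‖ * (ε n + ε m) := by
    intro f n m
    have hT : Filter.Tendsto
        (fun c => ‖f (unW (κ n c)) - f (unW (κ m c))‖) ↑V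
        (𝓝 ‖f (unW (x n)) - f (unW (x m))‖) := ((hFtend f n).sub (hFtend f m)).norm
    refine le_of_tendsto hT ?_
    filter_upwards [hCV n, hCV m] with c hcn hcm
    have h1 := (hκmem n c hcn).2
    have h2 := (hκmem m c hcm).2
    have e1 : ‖f (unW (κ n c)) - f (unW c)‖ ≤ ‖f‖ * ε n := by
      rw [← map_sub]
      calc ‖f (unW (κ n c) - unW c)‖ ≤ ‖f‖ * ‖unW (κ n c) - unW c‖ := f.le_opNorm _
        _ ≤ ‖f‖ * ε n := by
            rw [norm_sub_rev]
            exact mul_le_mul_of_nonneg_left h1 (norm_nonneg f)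
    have e2 : ‖f (unW c) - f (unW (κ m c))‖ ≤ ‖f‖ * ε m := by
      rw [← map_sub]
      calc ‖f (unW c - unW (κ m c))‖ ≤ ‖f‖ * ‖unW c - unW (κ m c)‖ := f.le_opNorm _
        _ ≤ ‖f‖ * ε m := mul_le_mul_of_nonneg_left h2 (norm_nonneg f)
    calc ‖f (unW (κ n c)) - f (unW (κ m c))‖
        ≤ ‖f (unW (κ n c)) - f (unW c)‖ + ‖f (unW c) - f (unW (κ m c))‖ :=
          norm_sub_le_norm_sub_add_norm_sub _ _ _
      _ ≤ ‖f‖ * ε n + ‖f‖ * ε m := add_le_add e1 e2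
      _ = ‖f‖ * (ε n + ε m) := by ring
  have hxnorm : ∀ n m, ‖unW (x n) - unW (x m)‖ ≤ ε n + ε m := by
    intro n m
    rcases eq_or_ne (unW (x n)) (unW (x m)) with he | hne
    · rw [he, sub_self, norm_zero]
      positivity
    obtain ⟨g, hg1, hgv⟩ := exists_dual_vector ℂ _ (norm_ne_zero_iff.mpr (sub_ne_zero.mpr hne))
    have hk := key g n m
    rw [hg1, one_mul] at hk
    have h2 : ‖g (unW (x n)) - g (unW (x m))‖ = ‖unW (x n) - unW (x m)‖ := by
      rw [← map_sub, hgv]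
      simp
    linarith [hk, h2.symm.le, h2.le]
  have hcauchy : CauchySeq (fun n => unW (x n)) := by
    apply cauchySeq_of_le_tendsto_0 (b := fun N => 2 * ε N)
    · intro n m N hn hm
      rw [dist_eq_norm]
      calc ‖unW (x n) - unW (x m)‖ ≤ ε n + ε m := hxnorm n m
        _ ≤ ε N + ε N := add_le_add (hεanti N n hn) (hεanti N m hm)
        _ = 2 * ε N := by ring
    · simpa only [mul_zero] using hεlim.const_mul (2 : ℝ)
  obtain ⟨y, hy⟩ := cauchySeq_tendsto_of_complete hcauchy
  have hfy : ∀ f : X →L[ℂ] ℂ,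
      Filter.Tendsto (fun c : WeakSpace ℂ X => f (unW c)) ↑V (𝓝 (f y)) := by
    intro f
    rw [Metric.tendsto_nhds]
    intro δ hδ
    set M : ℝ := ‖f‖ + 1 with hMdef
    have hM : 0 < M := by positivity
    have hfM : ‖f‖ < M := by simp [hMdef]
    have h1 : ∀ᶠ k in atTop, ε k < δ / (3 * M) :=
      hεlim.eventually (gt_mem_nhds (by positivity))
    have h2 : ∀ᶠ k in atTop, ‖unW (x k) - y‖ < δ / (3 * M) := by
      have := Metric.tendsto_nhds.mp hy (δ / (3 * M)) (by positivity)
      simpa [dist_eq_norm] using this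
    obtain ⟨n, hn1, hn2⟩ := (h1.and h2).exists
    have hev2 : ∀ᶠ c in ↑V, dist (f (unW (κ n c))) (f (unW (x n))) < δ / 3 :=
      Metric.tendsto_nhds.mp (hFtend f n) (δ / 3) (by positivity)
    filter_upwards [hCV n, hev2] with c hc hdist
    have hb1 : ‖f (unW c) - f (unW (κ n c))‖ ≤ ‖f‖ * ε n := by
      rw [← map_sub]
      calc ‖f (unW c - unW (κ n c))‖ ≤ ‖f‖ * ‖unW c - unW (κ n c)‖ := f.le_opNorm _
        _ ≤ ‖f‖ * ε n := mul_le_mul_of_nonneg_left (hκmem n c hc).2 (norm_nonneg f)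
    have hb3 : ‖f (unW (x n)) - f y‖ ≤ ‖f‖ * ‖unW (x n) - y‖ := by
      rw [← map_sub]
      exact f.le_opNorm _
    have hq1 : ‖f‖ * ε n < δ / 3 := by
      have : ‖f‖ * ε n ≤ M * ε n :=
        mul_le_mul_of_nonneg_right hfM.le (hεpos n).le
      have h' : M * ε n < M * (δ / (3 * M)) := by
        exact mul_lt_mul_of_pos_left hn1 hM
      have he : M * (δ / (3 * M)) = δ / 3 := by
        field_simp
      calc ‖f‖ * ε n ≤ M * ε n := this
        _ < M * (δ / (3 * M)) := h'
        _ = δ / 3 := he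
    have hq3 : ‖f‖ * ‖unW (x n) - y‖ < δ / 3 := by
      have : ‖f‖ * ‖unW (x n) - y‖ ≤ M * ‖unW (x n) - y‖ :=
        mul_le_mul_of_nonneg_right hfM.le (norm_nonneg _)
      have h' : M * ‖unW (x n) - y‖ < M * (δ / (3 * M)) :=
        mul_lt_mul_of_pos_left hn2 hM
      have he : M * (δ / (3 * M)) = δ / 3 := by
        field_simp
      calc ‖f‖ * ‖unW (x n) - y‖ ≤ M * ‖unW (x n) - y‖ := this
        _ < M * (δ / (3 * M)) := h'
        _ = δ / 3 := he
    have htri : dist (f (unW c)) (f y) ≤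
        ‖f (unW c) - f (unW (κ n c))‖ + dist (f (unW (κ n c))) (f (unW (x n)))
          + ‖f (unW (x n)) - f y‖ := by
      rw [dist_eq_norm, dist_eq_norm]
      calc ‖f (unW c) - f y‖
          ≤ ‖f (unW c) - f (unW (κ n c))‖ + ‖f (unW (κ n c)) - f y‖ :=
            norm_sub_le_norm_sub_add_norm_sub _ _ _
        _ ≤ ‖f (unW c) - f (unW (κ n c))‖ +
            (‖f (unW (κ n c)) - f (unW (x n))‖ + ‖f (unW (x n)) - f y‖) := by
            gcongr
            exact norm_sub_le_norm_sub_add_norm_sub _ _ _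
        _ = _ := by ring
    linarith
  have hle : ↑V ≤ 𝓝 (toWeakSpace ℂ X y) := by
    have hT : Filter.Tendsto (id : WeakSpace ℂ X → WeakSpace ℂ X) ↑V
        (𝓝 (toWeakSpace ℂ X y)) := by
      apply (WeakBilin.tendsto_iff_forall_eval_tendsto (B := (topDualPairing ℂ X).flip) pairing_inj).mpr
      intro f
      exact hfy f
    rwa [Filter.tendsto_id'] at hT
  refine ⟨toWeakSpace ℂ X y, ?_, hle⟩
  have hnb : (𝓝 (toWeakSpace ℂ X y) ⊓ 𝓟 (closure D)).NeBot :=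
    Filter.neBot_of_le (le_inf hle (Filter.le_principal_iff.mpr hV))
  have := mem_closure_iff_clusterPt.mpr hnb
  rwa [closure_closure] at this

end Approx

section Ops
variable {X Y : Type*} [NormedAddCommGroup X] [NormedSpace ℂ X]
  [NormedAddCommGroup Y] [NormedSpace ℂ Y]

lemma wkCompact_congr {T S : X →L[ℂ] X} (h : ∀ x, T x = S x)
    (hT : WkCompact T) : WkCompact S := by
  intro s hs
  rw [show ⇑S = ⇑T from funext fun x => (h x).symm]
  exact hT s hs

lemma wkCompact_zero : WkCompact (0 : X →L[ℂ] X) := by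
  intro s hs
  apply wk_mono (t := {(0 : WeakSpace ℂ X)}) ?_ isCompact_singleton.closure
  rintro - ⟨x, _, rfl⟩
  simp
  exact Set.mem_singleton_iff.mpr rfl

lemma wkCompact_add {T S : X →L[ℂ] X} (hT : WkCompact T) (hS : WkCompact S) :
    WkCompact (T + S) := by
  intro s hs
  apply wk_mono ?_ (wk_add (hT s hs) (hS s hs))
  rintro - ⟨x, hx, rfl⟩
  exact ⟨T x, ⟨x, hx, rfl⟩, S x, ⟨x, hx, rfl⟩, rfl⟩

lemma wkCompact_smul (c : ℂ) {T : X →L[ℂ] X} (hT : WkCompact T) :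
    WkCompact (c • T) := by
  intro s hs
  apply wk_mono ?_ (wk_smul c (hT s hs))
  rintro - ⟨x, hx, rfl⟩
  exact ⟨T x, ⟨x, hx, rfl⟩, rfl⟩

lemma wkCompact_comp3 {T : X →L[ℂ] X} (hT : WkCompact T) (U : Y →L[ℂ] X)
    (Vm : X →L[ℂ] Y) {S : Y →L[ℂ] Y} (hS : ∀ y, S y = Vm (T (U y))) :
    WkCompact S := by
  intro s hs
  obtain ⟨C, hC⟩ := isBounded_iff_forall_norm_le.mp hs
  have hUs : Bornology.IsBounded (U '' s) := by
    rw [isBounded_iff_forall_norm_le]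
    refine ⟨‖U‖ * C, ?_⟩
    rintro - ⟨x, hx, rfl⟩
    calc ‖U x‖ ≤ ‖U‖ * ‖x‖ := U.le_opNorm x
      _ ≤ ‖U‖ * C := mul_le_mul_of_nonneg_left (hC x hx) (norm_nonneg U)
  have h1 : IsCompact (closure (T '' (U '' s) : Set (WeakSpace ℂ X))) := hT _ hUs
  have h2 := wk_image Vm h1
  apply wk_mono ?_ h2
  rintro - ⟨y, hy, rfl⟩
  exact ⟨T (U y), ⟨U y, ⟨y, hy, rfl⟩, rfl⟩, (hS y).symm⟩

lemma wkCompact_limit [CompleteSpace X] {T : X →L[ℂ] X}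
    (h : ∀ ε : ℝ, 0 < ε → ∃ S : X →L[ℂ] X, WkCompact S ∧ ‖T - S‖ ≤ ε) :
    WkCompact T := by
  intro s hs
  obtain ⟨C, hC⟩ := isBounded_iff_forall_norm_le.mp hs
  set C' : ℝ := max C 0 with hC'def
  have hC'0 : 0 ≤ C' := le_max_right _ _
  apply wk_approx
  intro δ hδ
  obtain ⟨S, hSw, hTS⟩ := h (δ / (C' + 1)) (by positivity)
  refine ⟨S '' s, hSw s hs, ?_⟩
  rintro - ⟨xv, hxv, rfl⟩
  refine ⟨S xv, Set.mem_image_of_mem _ hxv, ?_⟩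
  show ‖T xv - S xv‖ ≤ δ
  have hxvC : ‖xv‖ ≤ C' := le_trans (hC xv hxv) (le_max_left _ _)
  calc ‖T xv - S xv‖ = ‖(T - S) xv‖ := by rw [ContinuousLinearMap.sub_apply]
    _ ≤ ‖T - S‖ * ‖xv‖ := (T - S).le_opNorm xv
    _ ≤ (δ / (C' + 1)) * C' :=
        mul_le_mul hTS hxvC (norm_nonneg _) (by positivity)
    _ ≤ (δ / (C' + 1)) * (C' + 1) := by
        have : (0:ℝ) ≤ δ / (C' + 1) := by positivity
        nlinarith
    _ = δ := div_mul_cancel₀ δ (by positivity)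

lemma wkCompact_span_closure {A : Type*} [NormedAddCommGroup A] [NormedSpace ℂ A]
    [CompleteSpace X] (Ψ : A →L[ℂ] (X →L[ℂ] X)) (s0 : Set A)
    (hs0 : ∀ p ∈ s0, WkCompact (Ψ p)) :
    ∀ a ∈ (Submodule.span ℂ s0).topologicalClosure, WkCompact (Ψ a) := by
  have hspan : ∀ a ∈ Submodule.span ℂ s0, WkCompact (Ψ a) := by
    intro a ha
    induction ha using Submodule.span_induction with
    | mem x hx => exact hs0 x hx
    | zero => exact wkCompact_congr (fun x => by rw [map_zero]) wkCompact_zero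
    | add x y hx hy ihx ihy =>
        exact wkCompact_congr (fun z => by rw [map_add]) (wkCompact_add ihx ihy)
    | smul c x hx ih =>
        exact wkCompact_congr (fun z => by rw [map_smul]) (wkCompact_smul c ih)
  intro a ha
  have ha' : a ∈ closure ((Submodule.span ℂ s0 : Submodule ℂ A) : Set A) := ha
  apply wkCompact_limit
  intro δ hδ
  obtain ⟨p, hp, hdist⟩ := Metric.mem_closure_iff.mp ha' (δ / (‖Ψ‖ + 1)) (by positivity)
  refine ⟨Ψ p, hspan p hp, ?_⟩
  have hΨ0 : (0:ℝ) ≤ ‖Ψ‖ := Ψ.opNorm_nonneg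
  calc ‖Ψ a - Ψ p‖ = ‖Ψ (a - p)‖ := by rw [map_sub]
    _ ≤ ‖Ψ‖ * ‖a - p‖ := Ψ.le_opNorm _
    _ ≤ (‖Ψ‖ + 1) * ‖a - p‖ := by nlinarith [norm_nonneg (a - p)]
    _ ≤ (‖Ψ‖ + 1) * (δ / (‖Ψ‖ + 1)) := by
        have : ‖a - p‖ ≤ δ / (‖Ψ‖ + 1) := by
          rw [← dist_eq_norm]
          exact hdist.le
        nlinarith
    _ = δ := mul_div_cancel₀ δ (by positivity)
end Ops

/-- A_M is an ideal in its second dual iff A is an ideal in its second dual,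
expressed via weak compactness of the multiplication operators. -/
theorem stmt12 {A B : Type*} [NonUnitalNormedRing A] [NormedSpace ℂ A]
    [IsScalarTower ℂ A A] [SMulCommClass ℂ A A] [CompleteSpace A]
    [NonUnitalNormedRing B] [NormedSpace ℂ B]
    [IsScalarTower ℂ B B] [SMulCommClass ℂ B B] [CompleteSpace B]
    (hfaith : ∀ a : A, a ≠ 0 → ∃ b c : A, a * b ≠ 0 ∧ c * a ≠ 0)
    (hAA : (Submodule.span ℂ {x : A | ∃ a b : A, x = a * b}).topologicalClosure = ⊤)
    (i : A →L[ℂ] B) (himul : ∀ a b : A, i (a * b) = i a * i b)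
    (hinorm : ∀ a : A, ‖i a‖ = mnorm a) (hdense : DenseRange i)
    (act : B →L[ℂ] A →L[ℂ] A) (hact : ∀ (x : B) (b : A), i (act x b) = x * i b)
    (actr : B →L[ℂ] A →L[ℂ] A) (hactr : ∀ (x : B) (b : A), i (actr x b) = i b * x) :
    (∀ x : B, WkCompact (ContinuousLinearMap.mul ℂ B x) ∧
        WkCompact ((ContinuousLinearMap.mul ℂ B).flip x)) ↔
    (∀ a : A, WkCompact (ContinuousLinearMap.mul ℂ A a) ∧
        WkCompact ((ContinuousLinearMap.mul ℂ A).flip a)) := by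
  classical
  -- the canonical bound for mnorm
  have hmax : ∀ a : A, BddAbove (Set.range
      fun b : {b : A // ‖b‖ ≤ 1} => max ‖a * b.1‖ ‖b.1 * a‖) := by
    intro a
    refine ⟨‖a‖, ?_⟩
    rintro - ⟨b, rfl⟩
    apply max_le
    · calc ‖a * b.1‖ ≤ ‖a‖ * ‖b.1‖ := norm_mul_le _ _
        _ ≤ ‖a‖ * 1 := mul_le_mul_of_nonneg_left b.2 (norm_nonneg a)
        _ = ‖a‖ := mul_one _
    · calc ‖b.1 * a‖ ≤ ‖b.1‖ * ‖a‖ := norm_mul_le _ _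
        _ ≤ 1 * ‖a‖ := mul_le_mul_of_nonneg_right b.2 (norm_nonneg a)
        _ = ‖a‖ := one_mul _
  -- i is injective
  have hinj : Function.Injective ⇑i := by
    have h0 : ∀ a : A, i a = 0 → a = 0 := by
      intro a hia
      by_contra hne
      obtain ⟨b, c, hab, hca⟩ := hfaith a hne
      have hb : b ≠ 0 := fun h => hab (by rw [h, mul_zero])
      have hbpos : (0:ℝ) < ‖b‖ := norm_pos_iff.mpr hb
      set u : A := ((‖b‖ : ℂ))⁻¹ • b with hu
      have hun : ‖u‖ ≤ 1 := by
        have h1 : ‖u‖ = 1 := by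
          rw [hu, norm_smul, norm_inv, Complex.norm_real,
            Real.norm_of_nonneg hbpos.le, inv_mul_cancel₀ hbpos.ne']
        exact h1.le
      have hle : max ‖a * u‖ ‖u * a‖ ≤ mnorm a :=
        le_ciSup (hmax a) (⟨u, hun⟩ : {b : A // ‖b‖ ≤ 1})
      have hau : (0:ℝ) < ‖a * u‖ := by
        have h2 : a * u = ((‖b‖:ℂ))⁻¹ • (a * b) := by rw [hu, mul_smul_comm]
        rw [h2, norm_smul]
        apply mul_pos
        · rw [norm_pos_iff]
          apply inv_ne_zero
          exact_mod_cast hbpos.ne'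
        · exact norm_pos_iff.mpr hab
      have hmn : (0:ℝ) < mnorm a :=
        lt_of_lt_of_le (lt_of_lt_of_le hau (le_max_left _ _)) hle
      have hz : ‖i a‖ = 0 := by rw [hia, norm_zero]
      rw [hinorm a] at hz
      linarith
    intro a b hab
    have h1 : i (a - b) = 0 := by rw [map_sub, hab, sub_self]
    exact sub_eq_zero.mp (h0 _ h1)
  constructor
  · -- B-side implies A-side
    intro hB a
    have hprodL : ∀ p ∈ {x : A | ∃ a b : A, x = a * b},
        WkCompact ((ContinuousLinearMap.mul ℂ A) p) := by
      rintro p ⟨b, c, rfl⟩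
      refine wkCompact_comp3 (hB (i c)).1 i (actr.flip b) ?_
      intro s
      apply hinj
      show i ((b * c) * s) = i (actr (i c * i s) b)
      calc i ((b * c) * s) = i (b * (c * s)) := by rw [mul_assoc]
        _ = i b * i (c * s) := himul _ _
        _ = i b * (i c * i s) := by rw [himul]
        _ = i (actr (i c * i s) b) := (hactr _ _).symm
    have hprodR : ∀ p ∈ {x : A | ∃ a b : A, x = a * b},
        WkCompact ((ContinuousLinearMap.mul ℂ A).flip p) := by
      rintro p ⟨b, c, rfl⟩
      refine wkCompact_comp3 (hB (i b)).2 i (act.flip c) ?_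
      intro s
      apply hinj
      show i (s * (b * c)) = i (act (i s * i b) c)
      calc i (s * (b * c)) = i ((s * b) * c) := by rw [mul_assoc]
        _ = i (s * b) * i c := himul _ _
        _ = (i s * i b) * i c := by rw [himul]
        _ = i (act (i s * i b) c) := by rw [hact]
    refine ⟨?_, ?_⟩
    · exact wkCompact_span_closure (ContinuousLinearMap.mul ℂ A) _ hprodL a
        (by rw [hAA]; trivial)
    · exact wkCompact_span_closure ((ContinuousLinearMap.mul ℂ A).flip) _ hprodR a
        (by rw [hAA]; trivial)
  · -- A-side implies B-side
    intro hA x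
    have hprodL : ∀ p ∈ {x : A | ∃ a b : A, x = a * b},
        WkCompact (((ContinuousLinearMap.mul ℂ B).comp i) p) := by
      rintro p ⟨b, c, rfl⟩
      refine wkCompact_comp3 (hA b).1 (actr.flip c) i ?_
      intro y
      show i (b * c) * y = i (b * actr y c)
      calc i (b * c) * y = (i b * i c) * y := by rw [himul]
        _ = i b * (i c * y) := mul_assoc _ _ _
        _ = i b * i (actr y c) := by rw [hactr]
        _ = i (b * actr y c) := (himul _ _).symm
    have hprodR : ∀ p ∈ {x : A | ∃ a b : A, x = a * b},
        WkCompact ((((ContinuousLinearMap.mul ℂ B).flip).comp i) p) := by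
      rintro p ⟨b, c, rfl⟩
      refine wkCompact_comp3 (hA c).2 (act.flip b) i ?_
      intro y
      show y * i (b * c) = i (act y b * c)
      calc y * i (b * c) = y * (i b * i c) := by rw [himul]
        _ = (y * i b) * i c := (mul_assoc _ _ _).symm
        _ = i (act y b) * i c := by rw [hact]
        _ = i (act y b * c) := (himul _ _).symm
    have hL : ∀ a : A, WkCompact (ContinuousLinearMap.mul ℂ B (i a)) := fun a =>
      wkCompact_span_closure ((ContinuousLinearMap.mul ℂ B).comp i) _ hprodL a
        (by rw [hAA]; trivial)
    have hR : ∀ a : A, WkCompact ((ContinuousLinearMap.mul ℂ B).flip (i a)) := fun a =>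
      wkCompact_span_closure (((ContinuousLinearMap.mul ℂ B).flip).comp i) _ hprodR a
        (by rw [hAA]; trivial)
    refine ⟨?_, ?_⟩
    · apply wkCompact_limit
      intro δ hδ
      obtain ⟨z, ⟨a, rfl⟩, hdist⟩ := Metric.mem_closure_iff.mp (hdense x) δ hδ
      refine ⟨ContinuousLinearMap.mul ℂ B (i a), hL a, ?_⟩
      calc ‖ContinuousLinearMap.mul ℂ B x - ContinuousLinearMap.mul ℂ B (i a)‖
          = ‖ContinuousLinearMap.mul ℂ B (x - i a)‖ := by rw [map_sub]
        _ ≤ ‖x - i a‖ := ContinuousLinearMap.opNorm_mul_apply_le ℂ B _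
        _ ≤ δ := by rw [← dist_eq_norm]; exact hdist.le
    · apply wkCompact_limit
      intro δ hδ
      obtain ⟨z, ⟨a, rfl⟩, hdist⟩ := Metric.mem_closure_iff.mp (hdense x) δ hδ
      refine ⟨(ContinuousLinearMap.mul ℂ B).flip (i a), hR a, ?_⟩
      have hfb : ∀ w : B, ‖(ContinuousLinearMap.mul ℂ B).flip w‖ ≤ ‖w‖ := by
        intro w
        refine ContinuousLinearMap.opNorm_le_bound _ (norm_nonneg w) fun y => ?_
        have hap : (ContinuousLinearMap.mul ℂ B).flip w y = y * w := rfl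
        rw [hap, mul_comm ‖w‖ ‖y‖]
        exact norm_mul_le y w
      calc ‖(ContinuousLinearMap.mul ℂ B).flip x - (ContinuousLinearMap.mul ℂ B).flip (i a)‖
          = ‖(ContinuousLinearMap.mul ℂ B).flip (x - i a)‖ := by rw [map_sub]
        _ ≤ ‖x - i a‖ := hfb _
        _ ≤ δ := by rw [← dist_eq_norm]; exact hdist.le
end

section
/- Let A be a commutative Banach algebra whose character space is discrete at a point e in the sense that the characteristic function χ_e of {e} belongs to A (viewing A as an algebra of functions on its character space with χ_e·χ_e = χ_e and φ_e(χ_e) = 1, and a·χ_e = φ_e(a)·χ_e for all a ∈ A). Then the topologically invariant φ_e-mean on A* is unique and equals χ_e. -/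
open scoped Topology
open Filter

/-- If the characteristic function χₑ of the point e belongs to the commutative
Banach algebra A (χₑ idempotent, φₑ(χₑ) = 1, a·χₑ = φₑ(a)χₑ), then the
topologically invariant φₑ-mean is unique and equals evaluation at χₑ. -/
theorem stmt16 {A : Type*} [NonUnitalNormedCommRing A] [NormedSpace ℂ A]
    [IsScalarTower ℂ A A] [SMulCommClass ℂ A A] [CompleteSpace A]
    (φ : A →L[ℂ] ℂ) (hφmul : ∀ a b : A, φ (a * b) = φ a * φ b) (hφ0 : φ ≠ 0)
    (χ : A) (hidem : χ * χ = χ) (hφχ : φ χ = 1)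
    (hact : ∀ a : A, a * χ = φ a • χ) :
    ∀ m : (A →L[ℂ] ℂ) →L[ℂ] ℂ,
      (m φ = 1 ∧ ∀ (f : A →L[ℂ] ℂ) (a : A), m (fdot f a) = φ a * m f) →
      ∀ f : A →L[ℂ] ℂ, m f = f χ := by
  rintro m ⟨hm1, hm2⟩ f
  have hkey : fdot f χ = (f χ) • φ := by
    ext b
    simp only [fdot, ContinuousLinearMap.comp_apply, ContinuousLinearMap.mul_apply',
      ContinuousLinearMap.smul_apply, smul_eq_mul]
    rw [mul_comm χ b, hact b, map_smul, smul_eq_mul, mul_comm]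
  have h1 := hm2 f χ
  rw [hφχ, one_mul, hkey, map_smul, smul_eq_mul, hm1, mul_one] at h1
  exact h1.symm
end
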